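/- Let D be a C-bialgebra, (A, Ψ_A) a simple commutative D-module algebra with field of constants k = A^{Ψ_A}, V a C-module, and Ψ_V an (A # D)-module structure on V (i.e. a module structure over the smash product), with restricted D-action Ψ̃_V. Then the natural map A ⊗_k V^{Ψ̃_V} → V is injective. -/

import Mathlib

open TensorProduct

section Defs

variable (C D : Type*) [CommRing C] [Ring D] [Bialgebra C D]

/-- The convolution product on `Hom_C(D, A)`. -/
noncomputable def conv {A : Type*} [Ring A] [Algebra C A] (f g : D →ₗ[C] A) : D →ₗ[C] A :=
  LinearMap.mul' C A ∘ₗ TensorProduct.map f g ∘ₗ Coalgebra.comul (R := C)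

variable (A : Type*) [Ring A] [Algebra C A]

/-- A `D`-module algebra structure on a `C`-algebra `A`. -/
structure ModuleAlgebraStructure where
  act : D →ₗ[C] A →ₗ[C] A
  act_one : act 1 = LinearMap.id
  act_mul : ∀ d e : D, act (d * e) = act d ∘ₗ act e
  measure_mul : ∀ (d : D) (a b : A),
    act d (a * b) = conv C D (act.flip a) (act.flip b) d
  measure_one : ∀ d : D, act d 1 = Coalgebra.counit (R := C) d • (1 : A)

/-- The natural map `A ⊗_k W → V`, `a ⊗ w ↦ a • w`, for a `k`-submodule `W` of `V`. -/
noncomputable def naturalMap (k A' V : Type*) [Field k] [CommRing A'] [Algebra k A']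
    [AddCommGroup V] [Module k V] [Module A' V] [IsScalarTower k A' V]
    (W : Submodule k V) : A' ⊗[k] W →ₗ[k] V :=
  TensorProduct.lift
    { toFun := fun a => ((LinearMap.lsmul A' V a).restrictScalars k) ∘ₗ W.subtype
      map_add' := fun a b => LinearMap.ext fun w => add_smul a b (w : V)
      map_smul' := fun c a => LinearMap.ext fun w => smul_assoc c a (w : V) }

end Defs

/-- A representation of `comul a` with index type in an arbitrary universe. -/
noncomputable def reprAt.{u1, u2, u3} {R : Type u1} {A : Type u2} [CommSemiring R]
    [AddCommMonoid A] [Module R A] [CoalgebraStruct R A] (a : A) :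
    Coalgebra.Repr R a (ULift.{u3} (Fin (Coalgebra.Repr.arbitrary R a).index.card)) :=
  letI r := Coalgebra.Repr.arbitrary R a
  letI e2 : ULift.{u3} (Fin r.index.card) ≃ r.index :=
    Equiv.ulift.trans r.index.equivFin.symm
  { index := Finset.univ
    left := fun t => r.left (e2 t)
    right := fun t => r.right (e2 t)
    eq := by
      rw [← r.eq, ← Finset.sum_coe_sort r.index (fun i => r.left i ⊗ₜ[R] r.right i)]
      exact Fintype.sum_equiv e2 _ _ (fun t => rfl) }

lemma repr_sum_counit_smul {C D : Type*} [CommRing C] [Ring D] [Bialgebra C D]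
    {d : D} {ι : Type*} (rep : Coalgebra.Repr C d ι) :
    ∑ i ∈ rep.index, Coalgebra.counit (R := C) (rep.right i) • rep.left i = d := by
  have h := Coalgebra.sum_tmul_counit_eq rep
  have h2 := congrArg (TensorProduct.rid C D) h
  rw [map_sum] at h2
  simp only [TensorProduct.rid_tmul] at h2
  simpa using h2


/-- let `(A, Ψ_A)` be a simple commutative `D`-module algebra over a field
`C`, with field of constants `k = A^{Ψ_A}` (realized as a field `k` with
`Set.range (algebraMap k A)` equal to the set of constants), and let `V` be a module over
the smash product `A # D`, i.e. an `A`-module with a `D`-action `Φ` satisfying the smash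
relation `Φ(d)(a • v) = Σ Ψ_A(d₍₁₎ ⊗ a) • Φ(d₍₂₎)(v)`.  If `W` is the `k`-submodule of
constants `V^{Φ}` of `V`, then the natural map `A ⊗_k W → V`, `a ⊗ w ↦ a • w`, is
injective. -/
theorem constants_tensor_injective
    (C D A k V : Type*) [Field C] [Ring D] [Bialgebra C D] [CommRing A] [Algebra C A]
    [Nontrivial A] (ΨA : ModuleAlgebraStructure C D A)
    (hsimple : ∀ I : Ideal A, (∀ (d : D), ∀ a ∈ I, ΨA.act d a ∈ I) → I = ⊥ ∨ I = ⊤)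
    [Field k] [Algebra C k] [Algebra k A] [IsScalarTower C k A]
    (hk : Set.range (algebraMap k A) =
      {a : A | ∀ d : D, ΨA.act d a = Coalgebra.counit (R := C) d • a})
    [AddCommGroup V] [Module C V] [Module A V] [Module k V]
    [IsScalarTower k A V] [IsScalarTower C A V]
    (Φ : D →ₗ[C] V →ₗ[C] V)
    (hone : Φ 1 = LinearMap.id)
    (hmul : ∀ d e : D, Φ (d * e) = Φ d ∘ₗ Φ e)
    (hsmash : ∀ (d : D) (a : A) (v : V) {ι : Type _} (rep : Coalgebra.Repr C d ι),
      Φ d (a • v) = ∑ i ∈ rep.index, ΨA.act (rep.left i) a • Φ (rep.right i) v)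
    (W : Submodule k V)
    (hW : (W : Set V) = {v : V | ∀ d : D, Φ d v = Coalgebra.counit (R := C) d • v}) :
    Function.Injective (naturalMap k A V W) := by
  classical
  set b := Module.Basis.ofVectorSpace k W with hb
  set w : Module.Basis.ofVectorSpaceIndex k W → V := fun i => (b i : V) with hwdef
  -- `w` is `k`-linearly independent in `V`
  have hlinind : LinearIndependent k w :=
    b.linearIndependent.map' W.subtype W.ker_subtype
  -- auxiliary scalar juggling
  have haux : ∀ (c : C) (a : A) (v : V), a • (c • v) = (c • a) • v := by
    intro c a v
    calc a • (c • v) = a • ((algebraMap C A c) • v) := by rw [algebraMap_smul]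
      _ = (a * algebraMap C A c) • v := (mul_smul _ _ _).symm
      _ = (algebraMap C A c * a) • v := by rw [mul_comm]
      _ = (c • a) • v := by rw [← Algebra.smul_def]
  -- the elements `w i` are constants
  have hwi : ∀ (i : Module.Basis.ofVectorSpaceIndex k W) (e : D),
      Φ e (w i) = Coalgebra.counit (R := C) e • w i := by
    intro i e
    have hmem : w i ∈ (W : Set V) := (b i).2
    rw [hW] at hmem
    exact hmem e
  -- key commutation : Φ d (a • w i) = ΨA.act d a • w i
  have hconst : ∀ (d : D) (a : A) (i : Module.Basis.ofVectorSpaceIndex k W),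
      Φ d (a • w i) = ΨA.act d a • w i := by
    intro d a i
    set rep := reprAt (R := C) d with hrep
    rw [hsmash d a (w i) rep]
    have hd := repr_sum_counit_smul rep
    calc ∑ t ∈ rep.index, ΨA.act (rep.left t) a • Φ (rep.right t) (w i)
        = ∑ t ∈ rep.index,
            (Coalgebra.counit (R := C) (rep.right t) • ΨA.act (rep.left t) a) • w i := by
          refine Finset.sum_congr rfl fun t _ => ?_
          rw [hwi i (rep.right t), haux]
      _ = ΨA.act d a • w i := by
          rw [← Finset.sum_smul]
          congr 1
          conv_rhs => rw [← hd]
          simp [map_sum, map_smul, LinearMap.sum_apply, LinearMap.smul_apply]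
  -- applying Φ d to a relation gives a new relation
  have happ : ∀ (s : Finset (Module.Basis.ofVectorSpaceIndex k W)) (d : D)
      (c : Module.Basis.ofVectorSpaceIndex k W → A),
      (∑ i ∈ s, c i • w i = 0) → ∑ i ∈ s, ΨA.act d (c i) • w i = 0 := by
    intro s d c hc
    have h0 : Φ d (∑ i ∈ s, c i • w i) = 0 := by rw [hc, map_zero]
    rw [map_sum] at h0
    calc ∑ i ∈ s, ΨA.act d (c i) • w i
        = ∑ i ∈ s, Φ d (c i • w i) :=
          Finset.sum_congr rfl fun i _ => (hconst d (c i) i).symm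
      _ = 0 := h0
  -- key independence lemma
  have key : ∀ (n : ℕ) (s : Finset (Module.Basis.ofVectorSpaceIndex k W)), s.card = n →
      ∀ g : Module.Basis.ofVectorSpaceIndex k W → A,
      (∑ i ∈ s, g i • w i = 0) → ∀ j ∈ s, g j = 0 := by
    intro n
    induction n using Nat.strong_induction_on with
    | _ n IH =>
    intro s hcard g hsum j hj
    by_contra hgj
    let J : Ideal A :=
      { carrier := {x | ∃ c : Module.Basis.ofVectorSpaceIndex k W → A,
          (∑ i ∈ s, c i • w i = 0) ∧ c j = x}
        add_mem' := by
          rintro x y ⟨c, hc, rfl⟩ ⟨c', hc', rfl⟩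
          refine ⟨c + c', ?_, rfl⟩
          simp only [Pi.add_apply, add_smul, Finset.sum_add_distrib, hc, hc', add_zero]
        zero_mem' := ⟨0, by simp, rfl⟩
        smul_mem' := by
          rintro a x ⟨c, hc, rfl⟩
          refine ⟨fun i => a * c i, ?_, rfl⟩
          calc ∑ i ∈ s, (a * c i) • w i = ∑ i ∈ s, a • (c i • w i) :=
                Finset.sum_congr rfl fun i _ => mul_smul _ _ _
            _ = a • ∑ i ∈ s, c i • w i := (Finset.smul_sum).symm
            _ = 0 := by rw [hc, smul_zero] }
    have hJstable : ∀ d : D, ∀ a ∈ J, ΨA.act d a ∈ J := by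
      rintro d a ⟨c, hc, rfl⟩
      exact ⟨fun i => ΨA.act d (c i), happ s d c hc, rfl⟩
    have hgjJ : g j ∈ J := ⟨g, hsum, rfl⟩
    rcases hsimple J hJstable with hbot | htop
    · rw [hbot] at hgjJ
      exact hgj ((Submodule.mem_bot A).mp hgjJ)
    · have h1 : (1 : A) ∈ J := by rw [htop]; trivial
      obtain ⟨c, hc, hcj⟩ := h1
      have hrel : ∀ (dd : D), ∀ i ∈ s,
          ΨA.act dd (c i) = Coalgebra.counit (R := C) dd • c i := by
        intro dd i hi
        have hA := happ s dd c hc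
        have hB : ∑ i ∈ s, (Coalgebra.counit (R := C) dd • c i) • w i = 0 := by
          have heq : ∑ i ∈ s, (Coalgebra.counit (R := C) dd • c i) • w i
              = Coalgebra.counit (R := C) dd • ∑ i ∈ s, c i • w i := by
            rw [Finset.smul_sum]
            exact Finset.sum_congr rfl fun i _ => smul_assoc _ _ _
          rw [heq, hc, smul_zero]
        have h0 : ∑ i ∈ s,
            (ΨA.act dd (c i) - Coalgebra.counit (R := C) dd • c i) • w i = 0 := by
          simp only [sub_smul, Finset.sum_sub_distrib, hA, hB, sub_zero]
        by_cases hij : i = j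
        · subst hij
          rw [hcj, ΨA.measure_one dd]
        · have hj0 : ΨA.act dd (c j) - Coalgebra.counit (R := C) dd • c j = 0 := by
            rw [hcj, ΨA.measure_one dd, sub_self]
          have h0' : ∑ i ∈ s.erase j,
              (ΨA.act dd (c i) - Coalgebra.counit (R := C) dd • c i) • w i = 0 := by
            rw [Finset.sum_erase s (by rw [hj0, zero_smul])]
            exact h0
          have hcard' : (s.erase j).card < n := by
            rw [← hcard]; exact Finset.card_erase_lt_of_mem hj
          have := IH _ hcard' (s.erase j) rfl _ h0' i (Finset.mem_erase.mpr ⟨hij, hi⟩)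
          exact sub_eq_zero.mp this
      have hcin : ∀ i ∈ s, ∃ μ : k, algebraMap k A μ = c i := by
        intro i hi
        have : c i ∈ Set.range (algebraMap k A) := by
          rw [hk]; exact fun dd => hrel dd i hi
        exact this
      choose μ hμ using hcin
      set g' : Module.Basis.ofVectorSpaceIndex k W → k :=
        fun i => if h : i ∈ s then μ i h else 0 with hg'
      have hsum' : ∑ i ∈ s, g' i • w i = 0 := by
        have heq : ∑ i ∈ s, g' i • w i = ∑ i ∈ s, c i • w i :=
          Finset.sum_congr rfl fun i hi => by
            simp only [hg', dif_pos hi]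
            rw [← hμ i hi, algebraMap_smul]
        rw [heq, hc]
      have hgj' : g' j = 0 := linearIndependent_iff'.mp hlinind s g' hsum' j hj
      have h10 : (1 : A) = 0 := by
        rw [← hcj, ← hμ j hj]
        have hμj : μ j hj = 0 := by simpa only [hg', dif_pos hj] using hgj'
        rw [hμj, map_zero]
      exact one_ne_zero h10
  -- deduce injectivity
  rw [injective_iff_map_eq_zero]
  intro x hx
  set B := (Module.Basis.ofVectorSpace k W).baseChange A with hB
  have hxrepr : ∑ i ∈ (B.repr x).support, B.repr x i • B i = x := by
    conv_rhs => rw [← B.linearCombination_repr x]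
    rw [Finsupp.linearCombination_apply, Finsupp.sum]
  have hmapx : naturalMap k A V W x = ∑ i ∈ (B.repr x).support, B.repr x i • w i := by
    conv_lhs => rw [← hxrepr]
    rw [map_sum]
    refine Finset.sum_congr rfl fun i hi => ?_
    rw [hB, Module.Basis.baseChange_apply, smul_tmul', smul_eq_mul, mul_one]
    rfl
  have hz : ∀ i ∈ (B.repr x).support, B.repr x i = 0 :=
    key _ _ rfl _ (by rw [← hmapx, hx])
  apply B.repr.injective
  rw [map_zero]
  ext i
  by_cases hi : i ∈ (B.repr x).support
  · exact hz i hi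
  · simpa using Finsupp.notMem_support_iff.mp hi
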